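/- arXiv:1703.04485 — 2 statements merged into one kernel-verified Lean document; each statement's English description precedes it below -/
import Mathlib

section
/- On ℝ², consider μ = δ_{(0,0)}, ν = δ_{(1,0)}, and for n ∈ ℕ, μₙ = μ, νₙ = δ_{(1,0)} + δ_{(1/2 − 1/n, 0)} − δ_{(1/2 + 1/n, 0)}. Then μₙ → μ and νₙ → ν in the flat norm (dual norm of Lipschitz functions vanishing at infinity / with bounded Lipschitz constant), while with φ the Euclidean norm, the optimal transport-type dissipation satisfies D_φ(μ,ν) = 1 and lim_{n→∞} D_φ(μₙ, νₙ) = 1/2. Hence D_φ is not continuous with respect to flat convergence. -/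
noncomputable section

abbrev Pt := EuclideanSpace ℝ (Fin 2)

def pt (a b : ℝ) : Pt := (WithLp.equiv 2 (Fin 2 → ℝ)).symm ![a, b]

/-- The pairing dissipation `D̃` on `ℝ²` (no boundary): infimum over all pairings
(multisets of pairs whose first/second coordinates give back `ν₁`/`ν₂`) of the sum
of the squared Euclidean distances. -/
def Dtilde (ν₁ ν₂ : Multiset Pt) : ℝ :=
  sInf {c | ∃ L : Multiset (Pt × Pt), L.map Prod.fst = ν₁ ∧ L.map Prod.snd = ν₂ ∧
    c = (L.map fun qp => ‖qp.1 - qp.2‖ ^ 2).sum}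

/-- `D_φ` (with `φ` the Euclidean norm) of two signed atomic measures, each represented by
the pair (positive part, negative part) of multisets of atoms. -/
def Dphi (P₁ N₁ P₂ N₂ : Multiset Pt) : ℝ := Dtilde (P₁ + N₂) (P₂ + N₁)

/-- Flat norm of the signed atomic measure with positive part `P` and negative part `N`:
sup of `∫ f dμ` over Lipschitz `f` with `|f| ≤ 1` and `Lip(f) ≤ 1`. -/
def flatNorm (P N : Multiset Pt) : ℝ :=
  sSup {r | ∃ f : Pt → ℝ, LipschitzWith 1 f ∧ (∀ x, |f x| ≤ 1) ∧
    r = ((P.map f).sum - (N.map f).sum)}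

lemma pt_sub (a b c d : ℝ) : pt a b - pt c d = pt (a-c) (b-d) := by
  ext i; fin_cases i <;> simp [pt]

lemma norm_pt (a : ℝ) : ‖pt a 0‖ = |a| := by
  simp [pt, EuclideanSpace.norm_eq, Fin.sum_univ_two, sq_abs]
  exact Real.sqrt_sq_eq_abs a

lemma norm_pt_sub (a c : ℝ) : ‖pt a 0 - pt c 0‖ = |a - c| := by
  rw [show pt a 0 - pt c 0 = pt (a-c) 0 by rw [pt_sub]; norm_num, norm_pt]

lemma normsq_pt_sub (a c : ℝ) : ‖pt a 0 - pt c 0‖^2 = (a - c)^2 := by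
  rw [norm_pt_sub, sq_abs]

lemma pair_eq {α : Type*} {a b c d : α} (h : ({a,b} : Multiset α) = {c,d}) :
    (a = c ∧ b = d) ∨ (a = d ∧ b = c) := by
  have ha : a ∈ ({c,d} : Multiset α) := by rw [← h]; simp
  simp only [Multiset.insert_eq_cons, Multiset.mem_cons, Multiset.mem_singleton] at ha
  rcases ha with rfl | rfl
  · left; refine ⟨rfl, ?_⟩
    have := (Multiset.cons_inj_right (s := ({b}:Multiset α)) (t := {d}) a).mp h
    simpa using this
  · right; refine ⟨rfl, ?_⟩
    rw [show ({c, a} : Multiset α) = {a, c} from Multiset.cons_swap c a {}] at h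
    have := (Multiset.cons_inj_right (s := ({b}:Multiset α)) (t := {c}) a).mp h
    simpa using this

lemma part1 : flatNorm (({pt 0 0} : Multiset Pt) + 0) (0 + ({pt 0 0} : Multiset Pt)) = 0 := by
  unfold flatNorm
  have hset : {r | ∃ f : Pt → ℝ, LipschitzWith 1 f ∧ (∀ x, |f x| ≤ 1) ∧
      r = (((({pt 0 0} : Multiset Pt)+0).map f).sum - (((0:Multiset Pt)+{pt 0 0}).map f).sum)}
      = {(0:ℝ)} := by
    ext r; simp only [Set.mem_setOf_eq, Set.mem_singleton_iff]
    constructor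
    · rintro ⟨f, -, -, rfl⟩; simp
    · rintro rfl
      exact ⟨fun _ => 0, (LipschitzWith.const 0).weaken zero_le_one, by norm_num, by simp⟩
  rw [hset, csSup_singleton]

lemma part2 (n : ℕ) :
    0 ≤ flatNorm (({pt 1 0, pt (1/2 - (n : ℝ)⁻¹) 0} : Multiset Pt) + 0)
        (({pt (1/2 + (n : ℝ)⁻¹) 0} : Multiset Pt) + ({pt 1 0} : Multiset Pt)) ∧
    flatNorm (({pt 1 0, pt (1/2 - (n : ℝ)⁻¹) 0} : Multiset Pt) + 0)
        (({pt (1/2 + (n : ℝ)⁻¹) 0} : Multiset Pt) + ({pt 1 0} : Multiset Pt)) ≤ 2 * (n : ℝ)⁻¹ := by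
  set x : ℝ := (n : ℝ)⁻¹ with hxdef
  have hx : 0 ≤ x := by positivity
  unfold flatNorm
  set S := {r | ∃ f : Pt → ℝ, LipschitzWith 1 f ∧ (∀ x, |f x| ≤ 1) ∧
    r = (((({pt 1 0, pt (1/2 - x) 0} : Multiset Pt) + 0).map f).sum -
      ((({pt (1/2 + x) 0} : Multiset Pt) + ({pt 1 0} : Multiset Pt)).map f).sum)} with hS
  have hbd : ∀ r ∈ S, r ≤ 2 * x := by
    rintro r ⟨f, hf, -, rfl⟩
    simp only [add_zero, Multiset.insert_eq_cons, Multiset.map_cons, Multiset.map_singleton,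
      Multiset.sum_cons, Multiset.sum_singleton, Multiset.map_add, Multiset.sum_add]
    have h1 : f (pt (1/2 - x) 0) - f (pt (1/2 + x) 0) ≤ 2 * x := by
      calc f (pt (1/2 - x) 0) - f (pt (1/2 + x) 0)
          ≤ dist (f (pt (1/2 - x) 0)) (f (pt (1/2 + x) 0)) := by
            rw [Real.dist_eq]; exact le_abs_self _
        _ ≤ 1 * dist (pt (1/2 - x) 0) (pt (1/2 + x) 0) := by
            simpa using hf.dist_le_mul _ _
        _ = 2 * x := by
            rw [one_mul, dist_eq_norm, norm_pt_sub]
            rw [show (1/2 - x) - (1/2 + x) = -(2*x) by ring, abs_neg,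
              abs_of_nonneg (by linarith)]
    linarith
  have hmem : (0:ℝ) ∈ S := by
    exact ⟨fun _ => 0, (LipschitzWith.const 0).weaken zero_le_one, by norm_num, by simp⟩
  constructor
  · exact le_csSup ⟨2*x, hbd⟩ hmem
  · exact csSup_le ⟨0, hmem⟩ hbd

lemma part3 : Dphi ({pt 0 0} : Multiset Pt) 0 ({pt 1 0} : Multiset Pt) 0 = 1 := by
  unfold Dphi Dtilde
  have hset : {c | ∃ L : Multiset (Pt × Pt),
      L.map Prod.fst = ({pt 0 0} : Multiset Pt) + 0 ∧
      L.map Prod.snd = ({pt 1 0} : Multiset Pt) + 0 ∧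
      c = (L.map fun qp => ‖qp.1 - qp.2‖ ^ 2).sum} = {(1:ℝ)} := by
    ext c; simp only [Set.mem_setOf_eq, Set.mem_singleton_iff, add_zero]
    constructor
    · rintro ⟨L, h1, h2, rfl⟩
      have hcard : Multiset.card L = 1 := by
        have := congrArg Multiset.card h1; simpa using this
      obtain ⟨q, rfl⟩ := Multiset.card_eq_one.mp hcard
      simp only [Multiset.map_singleton, Multiset.singleton_inj] at h1 h2
      simp [h1, h2, normsq_pt_sub]
    · rintro rfl
      refine ⟨{(pt 0 0, pt 1 0)}, by simp, by simp, ?_⟩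
      simp [normsq_pt_sub]
  rw [hset, csInf_singleton]

lemma part4 (n : ℕ) :
    Dphi ({pt 0 0} : Multiset Pt) 0
      ({pt 1 0, pt (1/2 - (n : ℝ)⁻¹) 0} : Multiset Pt)
      ({pt (1/2 + (n : ℝ)⁻¹) 0} : Multiset Pt) = 2 * (1/2 - (n : ℝ)⁻¹)^2 := by
  set x : ℝ := (n : ℝ)⁻¹ with hxdef
  have hx : 0 ≤ x := by positivity
  unfold Dphi Dtilde
  set S := {c | ∃ L : Multiset (Pt × Pt),
      L.map Prod.fst = ({pt 0 0} : Multiset Pt) + ({pt (1/2 + x) 0} : Multiset Pt) ∧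
      L.map Prod.snd = ({pt 1 0, pt (1/2 - x) 0} : Multiset Pt) + 0 ∧
      c = (L.map fun qp => ‖qp.1 - qp.2‖ ^ 2).sum} with hS
  have hmem : 2 * (1/2 - x)^2 ∈ S := by
    refine ⟨{(pt 0 0, pt (1/2 - x) 0), (pt (1/2 + x) 0, pt 1 0)}, by simp, ?_, ?_⟩
    · show ({pt (1/2 - x) 0, pt 1 0} : Multiset Pt) = _
      rw [add_zero]
      exact Multiset.cons_swap _ _ _
    · simp [normsq_pt_sub]; ring
  have hlb : ∀ c ∈ S, 2 * (1/2 - x)^2 ≤ c := by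
    rintro c ⟨L, h1, h2, rfl⟩
    have hcard : Multiset.card L = 2 := by
      have := congrArg Multiset.card h1; simpa using this
    obtain ⟨q, r, rfl⟩ := Multiset.card_eq_two.mp hcard
    rw [show ({pt 0 0} : Multiset Pt) + ({pt (1/2 + x) 0} : Multiset Pt)
        = {pt 0 0, pt (1/2 + x) 0} by rfl] at h1
    rw [add_zero] at h2
    simp only [Multiset.insert_eq_cons, Multiset.map_cons, Multiset.map_singleton] at h1 h2
    have e1 := pair_eq h1
    have e2 := pair_eq h2
    simp only [Multiset.insert_eq_cons, Multiset.map_cons, Multiset.map_singleton,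
      Multiset.sum_cons, Multiset.sum_singleton]
    have key : ∀ u v : ℝ, ‖pt u 0 - pt v 0‖^2 = (u-v)^2 := normsq_pt_sub
    rcases e1 with ⟨hq1, hr1⟩ | ⟨hq1, hr1⟩ <;> rcases e2 with ⟨hq2, hr2⟩ | ⟨hq2, hr2⟩ <;>
      rw [show (q:Pt×Pt) = (q.1, q.2) from rfl, show (r:Pt×Pt) = (r.1, r.2) from rfl,
        hq1, hr1, hq2, hr2] <;>
      simp only [key] <;> nlinarith [sq_nonneg x, sq_nonneg (1/2 - x)]
  exact le_antisymm (csInf_le ⟨_, hlb⟩ hmem) (le_csInf ⟨_, hmem⟩ hlb)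

/-- with `μ = δ₍₀,₀₎`, `ν = δ₍₁,₀₎`, `μₙ = μ` and
`νₙ = δ₍₁,₀₎ + δ₍₁/₂₋₁/ₙ,₀₎ − δ₍₁/₂₊₁/ₙ,₀₎`, one has `μₙ → μ`, `νₙ → ν` in the flat norm,
while `D_φ(μ,ν) = 1` and `D_φ(μₙ,νₙ) → 1/2`: `D_φ` is not flat-continuous. -/
theorem stmt_4 :
    Filter.Tendsto
      (fun _ : ℕ => flatNorm (({pt 0 0} : Multiset Pt) + 0) (0 + ({pt 0 0} : Multiset Pt)))
      Filter.atTop (nhds 0) ∧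
    Filter.Tendsto
      (fun n : ℕ => flatNorm
        (({pt 1 0, pt (1/2 - (n : ℝ)⁻¹) 0} : Multiset Pt) + 0)
        (({pt (1/2 + (n : ℝ)⁻¹) 0} : Multiset Pt) + ({pt 1 0} : Multiset Pt)))
      Filter.atTop (nhds 0) ∧
    Dphi ({pt 0 0} : Multiset Pt) 0 ({pt 1 0} : Multiset Pt) 0 = 1 ∧
    Filter.Tendsto
      (fun n : ℕ => Dphi ({pt 0 0} : Multiset Pt) 0
        ({pt 1 0, pt (1/2 - (n : ℝ)⁻¹) 0} : Multiset Pt)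
        ({pt (1/2 + (n : ℝ)⁻¹) 0} : Multiset Pt))
      Filter.atTop (nhds (1/2)) := by
  have hinv : Filter.Tendsto (fun n : ℕ => ((n : ℝ))⁻¹) Filter.atTop (nhds 0) :=
    tendsto_inv_atTop_zero.comp tendsto_natCast_atTop_atTop
  refine ⟨?_, ?_, part3, ?_⟩
  · simp only [part1]; exact tendsto_const_nhds
  · have h2 : Filter.Tendsto (fun n : ℕ => 2 * ((n : ℝ))⁻¹) Filter.atTop (nhds 0) := by
      simpa using hinv.const_mul 2
    exact tendsto_of_tendsto_of_tendsto_of_le_of_le tendsto_const_nhds h2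
      (fun n => (part2 n).1) (fun n => (part2 n).2)
  · have hc : Continuous (fun y : ℝ => 2 * (1/2 - y)^2) := by continuity
    have := (hc.tendsto 0).comp hinv
    have h : Filter.Tendsto (fun n : ℕ => 2 * (1/2 - ((n:ℝ))⁻¹)^2) Filter.atTop (nhds (1/2)) := by
      convert this using 2 <;> norm_num
    exact h.congr (fun n => (part4 n).symm)

end
end

section
/- Let K ⊂ ℝ^N be compact, F : K → (subsets of ℝ^N) an upper semicontinuous set-valued map with nonempty, closed, bounded, convex values, and let x^τ : [0,T] → K be a sequence of absolutely continuous τ-solutions of ẋ ∈ F(x), meaning ẋ^τ(t) ∈ ⋃_{s ∈ [t−τ,t+τ]} {ξ : dist(ξ, F(x^τ(s))) ≤ τ} for a.e. t, converging uniformly as τ → 0 to x : [0,T] → K with x^τ uniformly Lipschitz. Then x is Lipschitz and satisfies ẋ(t) ∈ F(x(t)) for a.e. t ∈ [0,T]. -/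
open MeasureTheory

open Set Filter in

lemma lemB (f : ℝ → ℝ) (a b M Kc : ℝ) (hKc : 0 ≤ Kc) (hab : a ≤ b)
    (hf : ∀ s ∈ Set.Icc a b, ∀ t ∈ Set.Icc a b, |f s - f t| ≤ Kc * |s - t|)
    (hd : ∀ᵐ s, s ∈ Set.Ioo a b → ∃ d, HasDerivAt f d s ∧ d ≤ M) :
    f b - f a ≤ M * (b - a) := by
  rcases eq_or_lt_of_le hab with rfl | hab'
  · simp
  have key : ∀ ε : ℝ, 0 < ε → f b - f a ≤ M * (b - a) + ε * ((b - a) + Kc + |M| + 1) := by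
    intro ε hε
    set K' : ℝ := Kc + |M| + 1 with hK'def
    have hK'pos : 0 < K' := by positivity
    set Z : Set ℝ := {s | ¬ (s ∈ Set.Ioo a b → ∃ d, HasDerivAt f d s ∧ d ≤ M)} ∪ {a, b} with hZdef
    have hZ0 : volume Z = 0 := by
      apply measure_union_null (ae_iff.1 hd)
      exact Set.Countable.measure_zero ((Set.countable_singleton b).insert a) _
    obtain ⟨U, hZU, hUopen, hUvol⟩ := Set.exists_isOpen_lt_of_lt Z (ENNReal.ofReal ε)
      (by rw [hZ0]; exact ENNReal.ofReal_pos.2 hε)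
    have hUfin : volume U ≠ ⊤ := (hUvol.trans ENNReal.ofReal_lt_top).ne
    have hUne : ∀ t : ℝ, volume (U ∩ Set.Ioo a t) ≠ ⊤ :=
      fun t => (lt_of_le_of_lt (measure_mono Set.inter_subset_left)
        (lt_top_iff_ne_top.2 hUfin)).ne
    set m : ℝ → ℝ := fun t => (volume (U ∩ Set.Ioo a t)).toReal with hmdef
    have m_nonneg : ∀ t, 0 ≤ m t := fun t => ENNReal.toReal_nonneg
    have m_mono : ∀ {s t : ℝ}, s ≤ t → m s ≤ m t := by
      intro s t hst
      exact ENNReal.toReal_mono (hUne t)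
        (measure_mono (Set.inter_subset_inter_right _ (Set.Ioo_subset_Ioo le_rfl hst)))
    have m_sub : ∀ s t : ℝ, s ≤ t → m t ≤ m s + (t - s) := by
      intro s t hst
      have h1 : volume (U ∩ Set.Ioo a t) ≤ volume (U ∩ Set.Ioo a s) + ENNReal.ofReal (t - s) := by
        calc volume (U ∩ Set.Ioo a t) ≤ volume ((U ∩ Set.Ioo a s) ∪ Set.Ico s t) := by
              apply measure_mono
              rintro y ⟨hyU, hy1, hy2⟩
              rcases lt_or_ge y s with h | h
              · exact Or.inl ⟨hyU, hy1, h⟩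
              · exact Or.inr ⟨h, hy2⟩
          _ ≤ volume (U ∩ Set.Ioo a s) + volume (Set.Ico s t) := measure_union_le _ _
          _ = volume (U ∩ Set.Ioo a s) + ENNReal.ofReal (t - s) := by rw [Real.volume_Ico]
      have h2 := ENNReal.toReal_mono
        (by simp [ENNReal.add_ne_top, hUne s, ENNReal.ofReal_ne_top]) h1
      rw [ENNReal.toReal_add (hUne s) ENNReal.ofReal_ne_top,
        ENNReal.toReal_ofReal (by linarith)] at h2
      exact h2
    have m_cont : Continuous m := by
      apply LipschitzWith.continuous (K := 1)
      apply LipschitzWith.of_dist_le_mul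
      intro s t
      rw [NNReal.coe_one, one_mul, Real.dist_eq, Real.dist_eq]
      rcases le_total s t with h | h
      · rw [abs_of_nonpos (by linarith [m_mono h]), abs_of_nonpos (by linarith)]
        linarith [m_sub s t h]
      · rw [abs_of_nonneg (by linarith [m_mono h]), abs_of_nonneg (by linarith)]
        linarith [m_sub t s h]
    have m_a : m a = 0 := by simp [hmdef]
    have m_le_eps : ∀ t, m t ≤ ε := by
      intro t
      have h1 : volume (U ∩ Set.Ioo a t) ≤ ENNReal.ofReal ε :=
        (measure_mono Set.inter_subset_left).trans hUvol.le
      have h2 := ENNReal.toReal_mono ENNReal.ofReal_ne_top h1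
      rwa [ENNReal.toReal_ofReal hε.le] at h2
    have m_gain : ∀ c h : ℝ, 0 < h → a ≤ c → Set.Ioo c (c + h) ⊆ U → m c + h ≤ m (c + h) := by
      intro c h hh hac hIU
      have hsub : (U ∩ Set.Ioo a c) ∪ Set.Ioo c (c + h) ⊆ U ∩ Set.Ioo a (c + h) := by
        rintro y (⟨hyU, hy1, hy2⟩ | ⟨hy1, hy2⟩)
        · exact ⟨hyU, hy1, by linarith⟩
        · exact ⟨hIU ⟨hy1, hy2⟩, by constructor <;> linarith⟩
      have hdisj : Disjoint (U ∩ Set.Ioo a c) (Set.Ioo c (c + h)) := by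
        rw [Set.disjoint_left]
        rintro y ⟨hyU, hy1, hy2⟩ ⟨hy3, hy4⟩
        linarith
      have h1 : volume (U ∩ Set.Ioo a c) + ENNReal.ofReal h ≤ volume (U ∩ Set.Ioo a (c + h)) := by
        have hvol : ENNReal.ofReal h = volume (Set.Ioo c (c + h)) := by
          rw [Real.volume_Ioo]; congr 1; ring
        rw [hvol, ← measure_union hdisj measurableSet_Ioo]
        exact measure_mono hsub
      have h2 := ENNReal.toReal_mono (hUne (c + h)) h1
      rw [ENNReal.toReal_add (hUne c) ENNReal.ofReal_ne_top,
        ENNReal.toReal_ofReal hh.le] at h2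
      exact h2
    have fcont : ContinuousOn f (Set.Icc a b) := by
      apply LipschitzOnWith.continuousOn (K := Kc.toNNReal)
      apply LipschitzOnWith.of_dist_le_mul
      intro s hs t ht
      rw [Real.dist_eq, Real.dist_eq, Real.coe_toNNReal _ hKc]
      exact hf s hs t ht
    set S : Set ℝ := Set.Icc a b ∩
      {t | f t - f a - ((M + ε) * (t - a) + K' * m t) ≤ 0} with hSdef
    have Sclosed : IsClosed S := by
      have hcont : ContinuousOn (fun t => f t - f a - ((M + ε) * (t - a) + K' * m t))
          (Set.Icc a b) := by
        apply ContinuousOn.sub (fcont.sub continuousOn_const)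
        exact (Continuous.continuousOn (by fun_prop)).add
          (continuousOn_const.mul m_cont.continuousOn)
      exact hcont.preimage_isClosed_of_isClosed isClosed_Icc isClosed_Iic
    have Sne : S.Nonempty := by
      refine ⟨a, ⟨le_rfl, hab⟩, ?_⟩
      simp only [Set.mem_setOf_eq, m_a]
      ring_nf
      simp
    have Sbdd : BddAbove S := ⟨b, fun t ht => ht.1.2⟩
    set c := sSup S with hcdef
    have hcS : c ∈ S := Sclosed.csSup_mem Sne Sbdd
    have hc1 : a ≤ c := hcS.1.1
    have hc2 : c ≤ b := hcS.1.2
    have hcle : f c - f a ≤ (M + ε) * (c - a) + K' * m c := by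
      have := hcS.2
      simp only [Set.mem_setOf_eq] at this
      linarith
    have hMabs : 0 ≤ M + |M| := by linarith [neg_abs_le M]
    have hcb : c = b := by
      by_contra hne
      have hclt : c < b := lt_of_le_of_ne hc2 hne
      -- produce u > c in S, contradiction
      have : ∃ u : ℝ, c < u ∧ u ∈ S := by
        by_cases hcU : c ∈ U
        · obtain ⟨r, hr, hball⟩ := Metric.isOpen_iff.1 hUopen c hcU
          set h := min r (b - c) with hhdef
          have hh : 0 < h := lt_min hr (by linarith)
          refine ⟨c + h, by linarith, ⟨⟨by linarith, by
            have := min_le_right r (b - c); linarith⟩, ?_⟩⟩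
          have hIU : Set.Ioo c (c + h) ⊆ U := by
            intro y ⟨hy1, hy2⟩
            apply hball
            rw [Metric.mem_ball, Real.dist_eq, abs_of_pos (by linarith)]
            have := min_le_left r (b - c)
            linarith
          have hm : m c + h ≤ m (c + h) := m_gain c h hh hc1 hIU
          have hfl : f (c + h) - f c ≤ Kc * h := by
            have h1 := hf (c + h) ⟨by linarith, by have := min_le_right r (b - c); linarith⟩
              c ⟨hc1, hc2⟩
            have h2 : |c + h - c| = h := by rw [add_sub_cancel_left, abs_of_pos hh]
            rw [h2] at h1
            calc f (c + h) - f c ≤ |f (c + h) - f c| := le_abs_self _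
              _ ≤ Kc * h := h1
          simp only [Set.mem_setOf_eq]
          have hK'm : K' * (m c + h) ≤ K' * m (c + h) :=
            mul_le_mul_of_nonneg_left hm hK'pos.le
          nlinarith [mul_pos hK'pos hh, mul_nonneg hMabs hh.le, mul_pos hε hh]
        · have hcZ : c ∉ Z := fun h => hcU (hZU h)
          rw [hZdef] at hcZ
          simp only [Set.mem_union, Set.mem_setOf_eq, Set.mem_insert_iff,
            Set.mem_singleton_iff, not_or, not_not] at hcZ
          obtain ⟨hP, hca, hcbne⟩ := hcZ
          have hcIoo : c ∈ Set.Ioo a b := ⟨lt_of_le_of_ne hc1 (Ne.symm hca), hclt⟩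
          obtain ⟨d, hdd, hdM⟩ := hP hcIoo
          have hslope := hasDerivAt_iff_tendsto_slope.1 hdd
          have hev1 : ∀ᶠ u in nhdsWithin c (Set.Ioi c), slope f c u < M + ε := by
            apply nhdsWithin_mono c (fun y (hy : y ∈ Set.Ioi c) => (ne_of_gt hy : y ≠ c))
            exact hslope.eventually (Filter.Tendsto.eventually_lt_const (by linarith) tendsto_id)
          have hev2 : Set.Ioc c b ∈ nhdsWithin c (Set.Ioi c) :=
            Ioc_mem_nhdsGT_of_mem ⟨le_rfl, hclt⟩
          obtain ⟨u, hu1, hu2, hu3⟩ := (hev1.and hev2).exists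
          refine ⟨u, hu2, ⟨⟨by linarith, hu3⟩, ?_⟩⟩
          rw [slope_def_field] at hu1
          have hfu : f u - f c ≤ (M + ε) * (u - c) := by
            have := (div_lt_iff₀ (by linarith : (0:ℝ) < u - c)).1 hu1
            linarith
          simp only [Set.mem_setOf_eq]
          have hK'm : K' * m c ≤ K' * m u := mul_le_mul_of_nonneg_left (m_mono hu2.le) hK'pos.le
          nlinarith
      obtain ⟨u, hcu, huS⟩ := this
      have := le_csSup Sbdd huS
      rw [← hcdef] at this
      linarith
    rw [hcb] at hcle
    have hK'm : K' * m b ≤ K' * ε := mul_le_mul_of_nonneg_left (m_le_eps b) hK'pos.le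
    nlinarith
  set c₀ : ℝ := (b - a) + Kc + |M| + 1 with hc₀
  have hc₀pos : 0 < c₀ := by have := abs_nonneg M; linarith
  apply le_of_forall_pos_le_add
  intro θ hθ
  have := key (θ / c₀) (by positivity)
  rw [div_mul_cancel₀ _ hc₀pos.ne'] at this
  linarith

lemma lemA {E : Type*} [NormedAddCommGroup E] [NormedSpace ℝ E] (C : Set E)
    (hC : Convex ℝ C) (hCc : IsClosed C) {g : ℝ → E} {a b : ℝ} (hab : a < b)
    {Kc : ℝ} (hKc : 0 ≤ Kc)
    (hg : ∀ s ∈ Set.Icc a b, ∀ t ∈ Set.Icc a b, ‖g s - g t‖ ≤ Kc * |s - t|)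
    (hder : ∀ᵐ s, s ∈ Set.Ioo a b → ∃ v, HasDerivAt g v s ∧ v ∈ C) :
    (b - a)⁻¹ • (g b - g a) ∈ C := by
  by_contra hmem
  obtain ⟨φ, u, hu1, hu2⟩ := geometric_hahn_banach_closed_point hC hCc hmem
  have hres : φ (g b) - φ (g a) ≤ u * (b - a) := by
    apply lemB (fun s => φ (g s)) a b u (‖φ‖ * Kc) (by positivity) hab.le
    · intro s hs t ht
      have h1 : φ (g s) - φ (g t) = φ (g s - g t) := by rw [map_sub]
      rw [h1, ← Real.norm_eq_abs]
      calc ‖φ (g s - g t)‖ ≤ ‖φ‖ * ‖g s - g t‖ := φ.le_opNorm _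
        _ ≤ ‖φ‖ * (Kc * |s - t|) :=
            mul_le_mul_of_nonneg_left (hg s hs t ht) (norm_nonneg _)
        _ = ‖φ‖ * Kc * |s - t| := by ring
    · filter_upwards [hder] with s hs hsIoo
      obtain ⟨v, hv, hvC⟩ := hs hsIoo
      exact ⟨φ v, φ.hasFDerivAt.comp_hasDerivAt s hv, (hu1 v hvC).le⟩
  have hba : (0:ℝ) < b - a := by linarith
  have h2 : φ ((b - a)⁻¹ • (g b - g a)) = (b - a)⁻¹ * (φ (g b) - φ (g a)) := by
    rw [_root_.map_smul, _root_.map_sub, smul_eq_mul]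
  have h3 : (b - a)⁻¹ * (φ (g b) - φ (g a)) ≤ (b - a)⁻¹ * (u * (b - a)) :=
    mul_le_mul_of_nonneg_left hres (inv_nonneg.2 hba.le)
  have h4 : (b - a)⁻¹ * (u * (b - a)) = u := by field_simp
  rw [h2] at hu2
  linarith

/-- Filippov: a uniform limit of uniformly Lipschitz `τ`-solutions of the
differential inclusion `ẋ ∈ F(x)`, with `F` upper semicontinuous with nonempty closed
bounded convex values on a compact set `K`, is a Lipschitz solution of `ẋ(t) ∈ F(x(t))`
for a.e. `t ∈ [0,T]`. -/
theorem stmt_12 {N : ℕ} (K : Set (EuclideanSpace ℝ (Fin N))) (hK : IsCompact K)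
    (F : EuclideanSpace ℝ (Fin N) → Set (EuclideanSpace ℝ (Fin N)))
    (hF : ∀ x ∈ K, (F x).Nonempty ∧ IsClosed (F x) ∧ Bornology.IsBounded (F x) ∧
      Convex ℝ (F x))
    (husc : ∀ x ∈ K, ∀ ε : ℝ, 0 < ε → ∃ δ : ℝ, 0 < δ ∧
      ∀ y ∈ K, dist y x < δ → F y ⊆ Metric.thickening ε (F x))
    (T : ℝ) (hT : 0 < T) (L : NNReal)
    (τs : ℕ → ℝ) (hτpos : ∀ n, 0 < τs n)
    (hτ0 : Filter.Tendsto τs Filter.atTop (nhds 0))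
    (xs : ℕ → ℝ → EuclideanSpace ℝ (Fin N))
    (hLip : ∀ n, LipschitzOnWith L (xs n) (Set.Icc 0 T))
    (hmem : ∀ n, ∀ t ∈ Set.Icc 0 T, xs n t ∈ K)
    (hsol : ∀ n, ∀ᵐ t : ℝ, t ∈ Set.Icc 0 T →
      ∃ v, HasDerivAt (xs n) v t ∧
        ∃ s ∈ Set.Icc (t - τs n) (t + τs n) ∩ Set.Icc 0 T,
          Metric.infDist v (F (xs n s)) ≤ τs n)
    (x : ℝ → EuclideanSpace ℝ (Fin N))
    (hconv : TendstoUniformlyOn xs x Filter.atTop (Set.Icc 0 T)) :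
    LipschitzOnWith L x (Set.Icc 0 T) ∧
    ∀ᵐ t : ℝ, t ∈ Set.Icc 0 T → ∃ v, HasDerivAt x v t ∧ v ∈ F (x t) := by
  -- Part 1: the limit is Lipschitz
  have xLip : LipschitzOnWith L x (Set.Icc 0 T) := by
    apply LipschitzOnWith.of_dist_le_mul
    intro s hs t ht
    have h1 : Filter.Tendsto (fun n => dist (xs n s) (xs n t)) Filter.atTop
        (nhds (dist (x s) (x t))) :=
      (hconv.tendsto_at hs).dist (hconv.tendsto_at ht)
    apply le_of_tendsto h1
    filter_upwards with n
    exact (hLip n).dist_le_mul s hs t ht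
  refine ⟨xLip, ?_⟩
  -- membership of the limit in K
  have hxK : ∀ t ∈ Set.Icc 0 T, x t ∈ K := by
    intro t ht
    exact hK.isClosed.mem_of_tendsto (hconv.tendsto_at ht)
      (Filter.Eventually.of_forall fun n => hmem n t ht)
  -- the clamped version of x is globally Lipschitz, hence a.e. differentiable
  set Q : ℝ → ℝ := fun s => ((Set.projIcc 0 T hT.le s : Set.Icc (0:ℝ) T) : ℝ) with hQdef
  set y : ℝ → EuclideanSpace ℝ (Fin N) := fun s => x (Q s) with hydef
  have hyLip : LipschitzWith L y := by
    have h1 : LipschitzWith L ((Set.Icc (0:ℝ) T).restrict x) := xLip.to_restrict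
    have h2 : LipschitzWith 1 (Set.projIcc (0:ℝ) T hT.le) := LipschitzWith.projIcc hT.le
    have h3 := h1.comp h2; rw [mul_one] at h3; exact h3
  have hyeq : ∀ s ∈ Set.Icc 0 T, y s = x s := by
    intro s hs
    simp only [hydef, hQdef, Set.projIcc_of_mem hT.le hs]
  have hyd : ∀ᵐ t : ℝ, DifferentiableAt ℝ y t := hyLip.ae_differentiableAt_real
  have hbdry : ∀ᵐ t : ℝ, t ∉ ({0, T} : Set ℝ) :=
    Set.Countable.ae_notMem ((Set.countable_singleton T).insert 0) _
  filter_upwards [hyd, hbdry] with t hdiff hnot ht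
  -- t is in the open interval
  have htIoo : t ∈ Set.Ioo 0 T := by
    simp only [Set.mem_insert_iff, Set.mem_singleton_iff, not_or] at hnot
    exact ⟨lt_of_le_of_ne ht.1 (Ne.symm hnot.1), lt_of_le_of_ne ht.2 hnot.2⟩
  have ht0 : (0:ℝ) ≤ t := ht.1
  have htT : t < T := htIoo.2
  -- derivative of x at t
  have hyv : HasDerivAt y (deriv y t) t := hdiff.hasDerivAt
  have hxy : x =ᶠ[nhds t] y :=
    Filter.eventuallyEq_of_mem (Ioo_mem_nhds htIoo.1 htIoo.2)
      (fun s hs => (hyeq s (Set.Ioo_subset_Icc_self hs)).symm)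
  have hx : HasDerivAt x (deriv y t) t := hyv.congr_of_eventuallyEq hxy
  set v := deriv y t with hvdef
  refine ⟨v, hx, ?_⟩
  have hxtK : x t ∈ K := hxK t ht
  obtain ⟨Fne, Fcl, Fbd, Fcvx⟩ := hF (x t) hxtK
  -- main claim: infDist v (F (x t)) ≤ 4 ε for every ε > 0
  have Claim : ∀ ε : ℝ, 0 < ε → Metric.infDist v (F (x t)) ≤ 4 * ε := by
    intro ε hε
    obtain ⟨δ, hδ, hδF⟩ := husc (x t) hxtK ε hε
    -- choose u = t + h with h small
    have hLpos : (0:ℝ) < 4 * (L:ℝ) + 1 := by positivity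
    set b₀ : ℝ := min T (t + δ / (4 * (L:ℝ) + 1)) with hb₀
    have htb₀ : t < b₀ := lt_min htT ((lt_add_iff_pos_right t).2 (div_pos hδ hLpos))
    have hslope := hasDerivAt_iff_tendsto_slope.1 hx
    have hev1 : ∀ᶠ u in nhdsWithin t (Set.Ioi t), dist (slope x t u) v < ε := by
      apply nhdsWithin_mono t (fun y (hy : y ∈ Set.Ioi t) => (ne_of_gt hy : y ≠ t))
      exact hslope.eventually (Metric.ball_mem_nhds v hε)
    have hev2 : Set.Ioc t b₀ ∈ nhdsWithin t (Set.Ioi t) :=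
      Ioc_mem_nhdsGT_of_mem ⟨le_rfl, htb₀⟩
    obtain ⟨u, hu_dist, hu_mem⟩ := (hev1.and hev2).exists
    obtain ⟨h, hhdef⟩ : ∃ h : ℝ, h = u - t := ⟨_, rfl⟩
    have hh : 0 < h := by rw [hhdef]; simp only [sub_pos]; exact hu_mem.1
    have huT : u ≤ T := hu_mem.2.trans (min_le_left _ _)
    have hub : u - t ≤ δ / (4 * (L:ℝ) + 1) := by
      have := hu_mem.2.trans (min_le_right _ _)
      linarith
    have hLbound : (L:ℝ) * (δ / (4 * (L:ℝ) + 1)) ≤ δ / 4 := by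
      rw [mul_div_assoc'] at *
      rw [div_le_div_iff₀ hLpos (by norm_num)]
      nlinarith [L.coe_nonneg]
    have hLh : (L:ℝ) * h ≤ δ / 4 := by
      rw [hhdef]
      exact le_trans (mul_le_mul_of_nonneg_left hub L.coe_nonneg) hLbound
    have huIcc : u ∈ Set.Icc (0:ℝ) T := ⟨le_trans ht0 (by linarith), huT⟩
    -- choose n large
    obtain ⟨η, hηdef⟩ : ∃ η : ℝ, η = min (δ / 4) (ε * h / 2) := ⟨_, rfl⟩
    have hη : 0 < η := by rw [hηdef]; exact lt_min (by positivity) (by positivity)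
    have he1 : ∀ᶠ n in Filter.atTop, τs n < min ε (δ / (4 * (L:ℝ) + 1)) :=
      hτ0.eventually_lt_const (lt_min hε (by positivity))
    have he2 : ∀ᶠ n in Filter.atTop, ∀ s ∈ Set.Icc 0 T, dist (x s) (xs n s) < η :=
      Metric.tendstoUniformlyOn_iff.1 hconv η hη
    obtain ⟨n, hn1, hn2⟩ := (he1.and he2).exists
    obtain ⟨τ, hτdef⟩ : ∃ τ : ℝ, τ = τs n := ⟨_, rfl⟩
    have hτε : τ ≤ ε := by
      rw [hτdef]; exact le_of_lt (lt_of_lt_of_le hn1 (min_le_left _ _))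
    have hLτ : (L:ℝ) * τ ≤ δ / 4 := by
      rw [hτdef]
      exact le_trans (mul_le_mul_of_nonneg_left
        (le_of_lt (lt_of_lt_of_le hn1 (min_le_right _ _))) L.coe_nonneg) hLbound
    -- the closed 2ε-thickening of F (x t)
    set C : Set (EuclideanSpace ℝ (Fin N)) := Metric.cthickening (2 * ε) (F (x t)) with hCdef
    have hC_iff : ∀ w, w ∈ C ↔ Metric.infDist w (F (x t)) ≤ 2 * ε := by
      intro w
      rw [hCdef, Metric.mem_cthickening_iff, Metric.infDist,
        ← ENNReal.le_ofReal_iff_toReal_le (Metric.infEdist_ne_top Fne) (by positivity)]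
    -- the average of xs n on [t, u] lies in C by lemA
    have havg : (u - t)⁻¹ • (xs n u - xs n t) ∈ C := by
      apply lemA C (Fcvx.cthickening _) Metric.isClosed_cthickening (by linarith : t < u)
        (L.coe_nonneg)
      · intro s hs s' hs'
        have hsub : Set.Icc t u ⊆ Set.Icc (0:ℝ) T :=
          Set.Icc_subset_Icc ht0 huT
        have := (hLip n).dist_le_mul s (hsub hs) s' (hsub hs')
        rwa [dist_eq_norm, Real.dist_eq] at this
      · filter_upwards [hsol n] with s hs hsIoo
        have hsIcc : s ∈ Set.Icc (0:ℝ) T := ⟨le_trans ht0 hsIoo.1.le, hsIoo.2.le.trans huT⟩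
        obtain ⟨w, hw, s', ⟨hs'1, hs'2⟩, hinf⟩ := hs hsIcc
        refine ⟨w, hw, ?_⟩
        have hs'K : xs n s' ∈ K := hmem n s' hs'2
        -- xs n s' is close to x t
        have habs : |s' - t| ≤ h + τ := by
          have h1 := hs'1.1
          have h2 := hs'1.2
          have h3 := hsIoo.1
          have h4 := hsIoo.2
          have h5 : t < u := hsIoo.1.trans hsIoo.2
          rw [abs_le, hhdef, hτdef]
          constructor <;> linarith
        have hdist : dist (xs n s') (x t) < δ := by
          have h1 : dist (xs n s') (x s') < η := by
            rw [dist_comm]; exact hn2 s' hs'2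
          have h2 : dist (x s') (x t) ≤ (L:ℝ) * |s' - t| := by
            have := xLip.dist_le_mul s' hs'2 t ht
            rwa [Real.dist_eq] at this
          have h3 : (L:ℝ) * |s' - t| ≤ (L:ℝ) * (h + τ) :=
            mul_le_mul_of_nonneg_left habs L.coe_nonneg
          have h4 : (L:ℝ) * (h + τ) ≤ δ / 4 + δ / 4 := by
            rw [mul_add]; exact add_le_add hLh hLτ
          have h5 : η ≤ δ / 4 := by rw [hηdef]; exact min_le_left _ _
          calc dist (xs n s') (x t) ≤ dist (xs n s') (x s') + dist (x s') (x t) :=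
                dist_triangle _ _ _
            _ < δ := by linarith
        have hsubset := hδF (xs n s') hs'K hdist
        have hne' : (F (xs n s')).Nonempty := (hF _ hs'K).1
        -- infDist w (F (x t)) ≤ τ + ε
        have hkey : Metric.infDist w (F (x t)) ≤ τ + ε := by
          apply le_of_forall_pos_le_add
          intro θ hθ
          have h1 : Metric.infDist w (F (xs n s')) < τ + θ := by
            rw [hτdef]; linarith
          obtain ⟨p, hp, hpd⟩ := (Metric.infDist_lt_iff hne').1 h1
          obtain ⟨z, hz, hzd⟩ := Metric.mem_thickening_iff.1 (hsubset hp)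
          have h2 : Metric.infDist w (F (x t)) ≤ dist w z := Metric.infDist_le_dist_of_mem hz
          have h3 : dist w z ≤ dist w p + dist p z := dist_triangle _ _ _
          linarith
        rw [hC_iff]
        linarith
    -- conclude
    have h2ε : Metric.infDist ((u - t)⁻¹ • (xs n u - xs n t)) (F (x t)) ≤ 2 * ε :=
      (hC_iff _).1 havg
    have hd1 : dist v (slope x t u) < ε := by rw [dist_comm]; exact hu_dist
    have hh' : (0:ℝ) < u - t := by rw [← hhdef]; exact hh
    have hd2 : dist (slope x t u) ((u - t)⁻¹ • (xs n u - xs n t)) ≤ ε := by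
      rw [slope_def_module, dist_eq_norm, ← smul_sub, norm_smul, Real.norm_eq_abs,
        abs_of_pos (inv_pos.2 hh')]
      have hrw : x u - x t - (xs n u - xs n t) = (x u - xs n u) - (x t - xs n t) := by abel
      rw [hrw]
      have h1 : ‖x u - xs n u‖ ≤ η := by
        rw [← dist_eq_norm]; exact (hn2 u huIcc).le
      have h2 : ‖x t - xs n t‖ ≤ η := by
        rw [← dist_eq_norm]; exact (hn2 t ht).le
      have h3 : ‖x u - xs n u - (x t - xs n t)‖ ≤ 2 * η := by
        calc ‖x u - xs n u - (x t - xs n t)‖ ≤ ‖x u - xs n u‖ + ‖x t - xs n t‖ :=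
              norm_sub_le _ _
          _ ≤ 2 * η := by linarith
      have hη2 : η ≤ ε * h / 2 := by rw [hηdef]; exact min_le_right _ _
      calc (u - t)⁻¹ * ‖x u - xs n u - (x t - xs n t)‖ ≤ (u - t)⁻¹ * (2 * η) :=
            mul_le_mul_of_nonneg_left h3 (inv_nonneg.2 hh'.le)
        _ ≤ (u - t)⁻¹ * (ε * h) := by
            apply mul_le_mul_of_nonneg_left _ (inv_nonneg.2 hh'.le)
            linarith
        _ = ε := by
            rw [hhdef]
            field_simp
    have htri : Metric.infDist v (F (x t)) ≤
        Metric.infDist ((u - t)⁻¹ • (xs n u - xs n t)) (F (x t)) +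
          dist v ((u - t)⁻¹ • (xs n u - xs n t)) :=
      Metric.infDist_le_infDist_add_dist
    have htri2 : dist v ((u - t)⁻¹ • (xs n u - xs n t)) ≤
        dist v (slope x t u) + dist (slope x t u) ((u - t)⁻¹ • (xs n u - xs n t)) :=
      dist_triangle _ _ _
    linarith
  -- conclude membership
  have hzero : Metric.infDist v (F (x t)) = 0 := by
    apply le_antisymm _ Metric.infDist_nonneg
    apply le_of_forall_pos_le_add
    intro θ hθ
    have := Claim (θ / 4) (by positivity)
    linarith
  exact (IsClosed.mem_iff_infDist_zero Fcl Fne).2 hzero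
end
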